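/- Let f and g be entire functions on ℂ with no common zero. Then there exist entire functions f̃ and g̃ such that f(z)·f̃(z) + g(z)·g̃(z) = 1 for all z ∈ ℂ. -/

import Mathlib

open Filter Metric Set Function
open scoped Topology NNReal ENNReal

namespace EntireBezout

lemma differentiable_partialSum (p : FormalMultilinearSeries ℂ ℂ ℂ) (n : ℕ) :
    Differentiable ℂ (fun y : ℂ => p.partialSum n y) := by
  have h : ∀ k : ℕ, (fun y : ℂ => (p k) (fun _ => y)) =
      fun y : ℂ => y ^ k • (p k) (fun _ => (1 : ℂ)) := by
    intro k
    funext y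
    have := (p k).map_smul_univ (fun _ : Fin k => y) (fun _ : Fin k => (1 : ℂ))
    simpa [Finset.prod_const, smul_eq_mul] using this.symm
  unfold FormalMultilinearSeries.partialSum
  apply Differentiable.fun_sum
  intro k _
  rw [h k]
  exact ((differentiable_id.pow k).smul_const _)

/-- Construction of the Mittag-Leffler term at one zero `a` of `g`. -/
lemma exists_term (f g : ℂ → ℂ) (hf : Differentiable ℂ f) (hg : Differentiable ℂ g)
    (a : ℂ) (hga : g a = 0) (hfa : f a ≠ 0) (hgne : ∃ z, g z ≠ 0) (ε : ℝ) (hε : 0 < ε) :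
    ∃ t : ℂ → ℂ,
      DifferentiableOn ℂ t {a}ᶜ ∧
      (∀ z : ℂ, ‖z‖ < 2/3 * ‖a‖ → ‖t z‖ ≤ ε) ∧
      (∃ δ > 0, ∃ C, ∀ z : ℂ, z ≠ a → ‖z - a‖ < δ → ‖t z - (f z * g z)⁻¹‖ ≤ C) := by
  have ag : AnalyticAt ℂ g a := hg.analyticAt a
  -- the order of `g` at `a` is a finite natural number `m ≥ 1`
  have horder : analyticOrderAt g a ≠ ⊤ := by
    intro htop
    obtain ⟨z₁, hz₁⟩ := hgne
    have hev : g =ᶠ[𝓝 a] 0 := analyticOrderAt_eq_top.mp htop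
    have : EqOn g 0 (univ : Set ℂ) := by
      apply AnalyticOnNhd.eqOn_zero_of_preconnected_of_eventuallyEq_zero
        (fun z _ => hg.analyticAt z) isPreconnected_univ (mem_univ a) hev
    exact hz₁ (this (mem_univ z₁))
  obtain ⟨m, hm⟩ : ∃ m : ℕ, analyticOrderAt g a = m := by
    cases h : analyticOrderAt g a with
    | top => exact absurd h horder
    | coe m => exact ⟨m, rfl⟩
  obtain ⟨u, hu, hu0, hgu⟩ := ag.analyticOrderAt_eq_natCast.mp hm
  have hm1 : 1 ≤ m := by
    rcases Nat.eq_zero_or_pos m with h0 | h1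
    · exfalso
      subst h0
      have := hgu.self_of_nhds
      simp at this
      rw [this] at hga
      exact hu0 hga
    · exact h1
  -- the analytic function w = (f * u)⁻¹
  set w : ℂ → ℂ := fun z => (f z * u z)⁻¹ with hw
  have aw : AnalyticAt ℂ w a := ((hf.analyticAt a).mul hu).inv (mul_ne_zero hfa hu0)
  obtain ⟨p, hp⟩ := aw
  -- the principal part
  set pa : ℂ → ℂ := fun z => p.partialSum m (z - a) / (z - a) ^ m with hpa
  have hpad : DifferentiableOn ℂ pa {a}ᶜ := by
    intro z hz
    have hz' : (z - a) ≠ 0 := sub_ne_zero.mpr hz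
    apply DifferentiableAt.differentiableWithinAt
    apply DifferentiableAt.div
    · exact ((differentiable_partialSum p m).comp (differentiable_id.sub_const a)).differentiableAt
    · exact ((differentiable_id.sub_const a).pow m).differentiableAt
    · exact pow_ne_zero m hz'
  -- the boundedness near a of pa - (f*g)⁻¹
  have key : ∃ δ > 0, ∃ C, ∀ z : ℂ, z ≠ a → ‖z - a‖ < δ → ‖pa z - (f z * g z)⁻¹‖ ≤ C := by
    have hO := hp.isBigO_sub_partialSum_pow m
    rw [Asymptotics.isBigO_iff] at hO
    obtain ⟨c, hc⟩ := hO
    rw [Metric.eventually_nhds_iff] at hc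
    obtain ⟨δ₁, hδ₁, hc⟩ := hc
    rw [Metric.eventually_nhds_iff] at hgu
    obtain ⟨δ₂, hδ₂, hgu'⟩ := hgu
    refine ⟨min δ₁ δ₂, lt_min hδ₁ hδ₂, c, ?_⟩
    intro z hza hzd
    have h1 : dist (z - a) 0 < δ₁ := by
      simpa [dist_eq_norm] using lt_of_lt_of_le hzd (min_le_left _ _)
    have h2 := hc h1
    have h3 : g z = (z - a) ^ m • u z := by
      apply hgu'
      simpa [dist_eq_norm] using lt_of_lt_of_le hzd (min_le_right _ _)
    have hzs : (z - a) ≠ 0 := sub_ne_zero.mpr hza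
    have hfg : (f z * g z)⁻¹ = w z / (z - a) ^ m := by
      rw [h3, smul_eq_mul, hw]
      field_simp
    have : pa z - (f z * g z)⁻¹ = (p.partialSum m (z - a) - w (a + (z - a))) / (z - a) ^ m := by
      rw [hfg, hpa]
      simp only [add_sub_cancel]
      rw [div_sub_div_same]
    rw [this]
    rw [norm_div, norm_pow]
    rw [div_le_iff₀ (pow_pos (norm_pos_iff.mpr hzs) m)]
    calc ‖p.partialSum m (z - a) - w (a + (z - a))‖
        = ‖w (a + (z - a)) - p.partialSum m (z - a)‖ := by rw [norm_sub_rev]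
      _ ≤ c * ‖‖z - a‖ ^ m‖ := h2
      _ = c * ‖z - a‖ ^ m := by rw [Real.norm_of_nonneg (by positivity)]
  -- now subtract a Taylor polynomial to get the bound on the ball of radius 2/3 |a|
  rcases eq_or_ne a 0 with rfl | ha0
  · -- a = 0 : the smallness condition is vacuous
    refine ⟨pa, hpad, ?_, key⟩
    intro z hz
    simp only [norm_zero, mul_zero] at hz
    exact absurd hz (not_lt.mpr (norm_nonneg z))
  · -- a ≠ 0 : pa is analytic on the ball of radius 3/4 |a| around 0
    have hanorm : (0 : ℝ) < ‖a‖ := norm_pos_iff.mpr ha0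
    set R : ℝ≥0 := ⟨3/4 * ‖a‖, by positivity⟩ with hR
    have hRc : (R : ℝ) = 3/4 * ‖a‖ := rfl
    have hRpos : 0 < R := by
      rw [← NNReal.coe_lt_coe, hRc]
      positivity
    have hsub : closedBall (0 : ℂ) (R : ℝ) ⊆ {a}ᶜ := by
      intro z hz
      simp only [mem_closedBall, dist_zero_right, hRc] at hz
      intro hza
      rw [mem_singleton_iff] at hza
      subst hza
      nlinarith
    have hball : DifferentiableOn ℂ pa (closedBall (0 : ℂ) (R : ℝ)) := hpad.mono hsub
    have hps : HasFPowerSeriesOnBall pa (cauchyPowerSeries pa 0 R) 0 R :=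
      hball.hasFPowerSeriesOnBall hRpos
    set r' : ℝ≥0 := ⟨7/10 * ‖a‖, by positivity⟩ with hr'
    have hr'c : (r' : ℝ) = 7/10 * ‖a‖ := rfl
    have hr'R : (r' : ℝ≥0∞) < (R : ℝ≥0∞) := by
      rw [ENNReal.coe_lt_coe, ← NNReal.coe_lt_coe, hRc, hr'c]
      nlinarith
    have huc := hps.tendstoUniformlyOn hr'R
    rw [Metric.tendstoUniformlyOn_iff] at huc
    obtain ⟨N, hN⟩ := (huc ε hε).exists
    set qa : ℂ → ℂ := fun z => (cauchyPowerSeries pa 0 R).partialSum N z with hqa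
    refine ⟨fun z => pa z - qa z, ?_, ?_, ?_⟩
    · exact hpad.sub (differentiable_partialSum _ N).differentiableOn
    · intro z hz
      have hz' : z ∈ ball (0 : ℂ) (r' : ℝ) := by
        simp only [mem_ball, dist_zero_right, hr'c]
        calc ‖z‖ < 2/3 * ‖a‖ := hz
          _ ≤ 7/10 * ‖a‖ := by nlinarith
      have := hN z hz'
      rw [dist_eq_norm] at this
      simp only [zero_add] at this
      exact this.le
    · -- boundedness near a still holds after subtracting the entire function qa
      obtain ⟨δ, hδ, C, hC⟩ := key
      have hqcont : ContinuousOn qa (closedBall a 1) :=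
        ((differentiable_partialSum _ N).continuous).continuousOn
      obtain ⟨Cq, hCq⟩ := (isCompact_closedBall a 1).exists_bound_of_continuousOn hqcont
      refine ⟨min δ 1, lt_min hδ one_pos, C + Cq, ?_⟩
      intro z hza hzd
      have h1 : ‖z - a‖ < δ := lt_of_lt_of_le hzd (min_le_left _ _)
      have h2 : z ∈ closedBall a 1 := by
        simp only [mem_closedBall, dist_eq_norm]
        exact le_of_lt (lt_of_lt_of_le hzd (min_le_right _ _))
      calc ‖pa z - qa z - (f z * g z)⁻¹‖
          = ‖(pa z - (f z * g z)⁻¹) + (-qa z)‖ := by ring_nf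
        _ ≤ ‖pa z - (f z * g z)⁻¹‖ + ‖-qa z‖ := norm_add_le _ _
        _ ≤ C + Cq := by
            rw [norm_neg]
            exact add_le_add (hC z hza h1) (hCq z h2)

/-- Zeros of a nonzero entire function meet every compact set in a finite set. -/
lemma zeros_finite {g : ℂ → ℂ} (hg : Differentiable ℂ g) (hgne : ∃ z, g z ≠ 0)
    {K : Set ℂ} (hK : IsCompact K) : ({z | g z = 0} ∩ K).Finite := by
  by_contra hinf
  rw [← Set.not_infinite, not_not] at hinf
  obtain ⟨x, _, hx⟩ := hinf.exists_accPt_of_subset_isCompact hK (inter_subset_right)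
  rw [accPt_iff_frequently] at hx
  have hfreq : ∃ᶠ z in 𝓝[≠] x, g z = 0 := by
    rw [frequently_nhdsWithin_iff]
    exact hx.mono (fun z hz => ⟨hz.2.1, hz.1⟩)
  rcases (hg.analyticAt x).eventually_eq_zero_or_eventually_ne_zero with h | h
  · obtain ⟨z₁, hz₁⟩ := hgne
    have : EqOn g 0 (univ : Set ℂ) :=
      AnalyticOnNhd.eqOn_zero_of_preconnected_of_eventuallyEq_zero
        (fun z _ => hg.analyticAt z) isPreconnected_univ (mem_univ x) h
    exact hz₁ (this (mem_univ z₁))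
  · exact (h.and_frequently hfreq).exists.elim (fun z hz => hz.1 hz.2)

/-- An isolated-zeros statement: around each zero there is a punctured ball without zeros. -/
lemma isolated_zero {g : ℂ → ℂ} (hg : Differentiable ℂ g) (hgne : ∃ z, g z ≠ 0)
    (a : ℂ) : ∃ r > 0, ∀ z ∈ ball a r, z ≠ a → g z ≠ 0 := by
  rcases (hg.analyticAt a).eventually_eq_zero_or_eventually_ne_zero with h | h
  · obtain ⟨z₁, hz₁⟩ := hgne
    have : EqOn g 0 (univ : Set ℂ) :=
      AnalyticOnNhd.eqOn_zero_of_preconnected_of_eventuallyEq_zero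
        (fun z _ => hg.analyticAt z) isPreconnected_univ (mem_univ a) h
    exact absurd (this (mem_univ z₁)) hz₁
  · rw [eventually_nhdsWithin_iff] at h
    rw [Metric.eventually_nhds_iff] at h
    obtain ⟨r, hr, h⟩ := h
    exact ⟨r, hr, fun z hz hza => h (by simpa [dist_comm] using hz) hza⟩

lemma zeros_countable {g : ℂ → ℂ} (hg : Differentiable ℂ g) (hgne : ∃ z, g z ≠ 0) :
    ({z | g z = 0}).Countable := by
  have : {z : ℂ | g z = 0} = ⋃ n : ℕ, ({z | g z = 0} ∩ closedBall 0 n) := by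
    ext z
    simp only [mem_iUnion, mem_inter_iff, mem_setOf_eq, mem_closedBall, dist_zero_right]
    constructor
    · intro hz
      exact ⟨⌈‖z‖⌉₊, hz, Nat.le_ceil _⟩
    · rintro ⟨n, hn, -⟩
      exact hn
  rw [this]
  exact countable_iUnion (fun n => (zeros_finite hg hgne (isCompact_closedBall 0 n)).countable)

/-- Gluing: extend a function differentiable off a closed set with isolated points,
bounded near each of them, to an entire function. -/
lemma glue {S : Set ℂ} (hScl : IsClosed S) (F : ℂ → ℂ)
    (hd : ∀ z ∉ S, DifferentiableAt ℂ F z)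
    (hb : ∀ a ∈ S, ∃ r > 0, (ball a r ∩ S ⊆ {a}) ∧ ∃ C, ∀ z ∈ ball a r \ {a}, ‖F z‖ ≤ C) :
    ∃ Fe : ℂ → ℂ, Differentiable ℂ Fe ∧ ∀ z ∉ S, Fe z = F z := by
  classical
  set Fe : ℂ → ℂ := fun z => if z ∈ S then limUnder (𝓝[≠] z) F else F z with hFe
  refine ⟨Fe, ?_, fun z hz => if_neg hz⟩
  intro z
  by_cases hzS : z ∈ S
  · obtain ⟨r, hr, hball, C, hC⟩ := hb z hzS
    have hdiff : DifferentiableOn ℂ F (ball z r \ {z}) := by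
      intro w hw
      refine (hd w ?_).differentiableWithinAt
      intro hwS
      exact hw.2 (hball ⟨hw.1, hwS⟩)
    have hbdd : BddAbove (norm ∘ F '' (ball z r \ {z})) := by
      refine ⟨C, ?_⟩
      rintro y ⟨w, hw, rfl⟩
      exact hC w hw
    have hupd := Complex.differentiableOn_update_limUnder_of_bddAbove
      (ball_mem_nhds z hr) hdiff hbdd
    have hupdAt : DifferentiableAt ℂ (update F z (limUnder (𝓝[≠] z) F)) z :=
      hupd.differentiableAt (by exact Metric.ball_mem_nhds z hr)
    apply hupdAt.congr_of_eventuallyEq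
    filter_upwards [ball_mem_nhds z hr] with w hw
    by_cases hwz : w = z
    · subst hwz
      simp [hFe, hzS]
    · have hwS : w ∉ S := fun hwS => hwz (hball ⟨hw, hwS⟩)
      simp [hFe, hwS, update_of_ne hwz]
  · apply (hd z hzS).congr_of_eventuallyEq
    filter_upwards [hScl.isOpen_compl.mem_nhds hzS] with w hw
    exact if_neg hw

end EntireBezout

/-- Bézout identity for entire functions with no common zero. -/
theorem entire_bezout (f g : ℂ → ℂ)
    (hf : Differentiable ℂ f) (hg : Differentiable ℂ g)
    (hnocommon : ∀ z : ℂ, f z ≠ 0 ∨ g z ≠ 0) :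
    ∃ ft gt : ℂ → ℂ, Differentiable ℂ ft ∧ Differentiable ℂ gt ∧
      ∀ z : ℂ, f z * ft z + g z * gt z = 1 := by
  classical
  open EntireBezout Filter Metric Set Function in
  open scoped Topology in
  by_cases hgz : ∀ z : ℂ, g z = 0
  · -- g ≡ 0 : f never vanishes
    have hfz : ∀ z, f z ≠ 0 := fun z => (hnocommon z).resolve_right (fun h => h (hgz z))
    refine ⟨fun z => (f z)⁻¹, fun z => 0, hf.inv hfz, differentiable_const 0, ?_⟩
    intro z
    simp [mul_inv_cancel₀ (hfz z)]
  · push_neg at hgz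
    set S : Set ℂ := {z | g z = 0} with hS
    have hScl : IsClosed S := isClosed_eq hg.continuous continuous_const
    have hScnt : S.Countable := EntireBezout.zeros_countable hg hgz
    haveI : Countable ↥S := hScnt.to_subtype
    obtain ⟨e, he⟩ := Countable.exists_injective_nat ↥S
    set ε : ↥S → ℝ := fun b => (1/2 : ℝ) ^ (e b) with hε
    have hεpos : ∀ b, 0 < ε b := fun b => by positivity
    have hεsum : Summable ε := summable_geometric_two.comp_injective he
    -- the Mittag-Leffler terms
    have hterm : ∀ b : ↥S, ∃ t : ℂ → ℂ,
        DifferentiableOn ℂ t {(b : ℂ)}ᶜ ∧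
        (∀ z : ℂ, ‖z‖ < 2/3 * ‖(b : ℂ)‖ → ‖t z‖ ≤ ε b) ∧
        (∃ δ > 0, ∃ C, ∀ z : ℂ, z ≠ (b : ℂ) → ‖z - (b : ℂ)‖ < δ →
          ‖t z - (f z * g z)⁻¹‖ ≤ C) := by
      intro b
      have hgb : g (b : ℂ) = 0 := b.2
      have hfb : f (b : ℂ) ≠ 0 := (hnocommon b).resolve_right (fun h => h hgb)
      exact EntireBezout.exists_term f g hf hg b hgb hfb hgz (ε b) (hεpos b)
    choose t ht1 ht2 ht3 using hterm
    -- finiteness of S in balls (as subsets of the index type)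
    have hTfin : ∀ R : ℝ, ({b : ↥S | ‖(b : ℂ)‖ ≤ R}).Finite := by
      intro R
      have h1 : (S ∩ closedBall 0 R).Finite :=
        EntireBezout.zeros_finite hg hgz (isCompact_closedBall 0 R)
      have h2 : {b : ↥S | ‖(b : ℂ)‖ ≤ R} = Subtype.val ⁻¹' (S ∩ closedBall 0 R) := by
        ext b
        simp only [mem_setOf_eq, mem_preimage, mem_inter_iff, mem_closedBall, dist_zero_right]
        exact ⟨fun h => ⟨b.2, h⟩, fun h => h.2⟩
      rw [h2]
      exact h1.preimage (Subtype.val_injective.injOn)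
    -- summability of the terms at each point
    have hsumm : ∀ z : ℂ, Summable (fun b : ↥S => t b z) := by
      intro z
      rw [← (hTfin (2 * (‖z‖ + 1))).summable_compl_iff]
      apply Summable.of_norm_bounded (g := ε ∘ Subtype.val) (hεsum.subtype _)
      rintro ⟨b, hb⟩
      simp only [mem_compl_iff, mem_setOf_eq, not_le] at hb
      apply ht2
      have h0 : (0:ℝ) ≤ ‖z‖ := norm_nonneg z
      calc ‖z‖ < 2/3 * (2 * (‖z‖ + 1)) := by nlinarith
        _ < 2/3 * ‖(b : ℂ)‖ := by nlinarith
    set P : ℂ → ℂ := fun z => ∑' b : ↥S, t b z with hP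
    -- the decomposition of P into a finite part and a tail
    have hdecomp : ∀ R : ℝ, ∀ z : ℂ,
        P z = (∑ b ∈ (hTfin R).toFinset, t b z) +
          ∑' b : ↑((↑(hTfin R).toFinset : Set ↥S)ᶜ), t (b : ↥S) z :=
      fun R z => ((hsumm z).sum_add_tsum_compl).symm
    -- differentiability and bound of the tail
    have htail : ∀ R : ℝ, 0 < R →
        DifferentiableOn ℂ
          (fun z => ∑' b : ↑((↑(hTfin (2*R)).toFinset : Set ↥S)ᶜ), t (b : ↥S) z)
          (ball 0 R) ∧
        ∀ z ∈ ball (0:ℂ) R,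
          ‖∑' b : ↑((↑(hTfin (2*R)).toFinset : Set ↥S)ᶜ), t (b : ↥S) z‖ ≤
            ∑' b : ↑((↑(hTfin (2*R)).toFinset : Set ↥S)ᶜ), ε (b : ↥S) := by
      intro R hR
      have hbig : ∀ b : ↑((↑(hTfin (2*R)).toFinset : Set ↥S)ᶜ), 2*R < ‖((b : ↥S) : ℂ)‖ := by
        rintro ⟨b, hb⟩
        simp only [mem_compl_iff, Finset.mem_coe, Set.Finite.mem_toFinset,
          mem_setOf_eq, not_le] at hb
        exact hb
      have hin : ∀ (b : ↑((↑(hTfin (2*R)).toFinset : Set ↥S)ᶜ)) (z : ℂ), z ∈ ball (0:ℂ) R →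
          ‖z‖ < 2/3 * ‖((b : ↥S) : ℂ)‖ := by
        intro b z hz
        rw [mem_ball, dist_zero_right] at hz
        have := hbig b
        nlinarith
      have hsumε : Summable (fun b : ↑((↑(hTfin (2*R)).toFinset : Set ↥S)ᶜ) => ε (b : ↥S)) :=
        hεsum.subtype _
      constructor
      · refine Complex.differentiableOn_tsum_of_summable_norm hsumε ?_ isOpen_ball ?_
        · intro b
          apply (ht1 (b : ↥S)).mono
          intro z hz
          rw [mem_ball, dist_zero_right] at hz
          simp only [mem_compl_iff, mem_singleton_iff]
          intro hzb
          have := hbig b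
          rw [← hzb] at this
          nlinarith
        · intro b z hz
          exact ht2 _ _ (hin b z hz)
      · intro z hz
        have hsumn : Summable (fun b : ↑((↑(hTfin (2*R)).toFinset : Set ↥S)ᶜ) =>
            ‖t (b : ↥S) z‖) :=
          Summable.of_nonneg_of_le (fun b => norm_nonneg _)
            (fun b => ht2 _ _ (hin b z hz)) hsumε
        refine le_trans (norm_tsum_le_tsum_norm hsumn) ?_
        exact hsumn.tsum_le_tsum (fun b => ht2 _ _ (hin b z hz)) hsumε
    -- P is differentiable off S
    have hPdiff : ∀ z ∉ S, DifferentiableAt ℂ P z := by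
      intro z₀ hz₀
      set R : ℝ := ‖z₀‖ + 1 with hRdef
      have hRpos : 0 < R := by positivity
      have heq : P = fun z => (∑ b ∈ (hTfin (2*R)).toFinset, t b z) +
          ∑' b : ↑((↑(hTfin (2*R)).toFinset : Set ↥S)ᶜ), t (b : ↥S) z := by
        funext z
        exact hdecomp (2*R) z
      rw [heq]
      apply DifferentiableAt.add
      · apply DifferentiableAt.fun_sum
        intro b _
        have hzb : z₀ ∈ ({(b : ℂ)}ᶜ : Set ℂ) := by
          simp only [mem_compl_iff, mem_singleton_iff]
          intro h
          exact hz₀ (h ▸ b.2)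
        exact (ht1 b).differentiableAt (isOpen_compl_singleton.mem_nhds hzb)
      · refine ((htail R hRpos).1).differentiableAt (isOpen_ball.mem_nhds ?_)
        simp only [mem_ball, dist_zero_right]
        linarith
    -- bound on the rest P - t a near each a ∈ S
    have hrest : ∀ a : ↥S, ∃ r > 0, (ball (a : ℂ) r ∩ S ⊆ {(a : ℂ)}) ∧
        ∃ C, ∀ z ∈ ball (a : ℂ) r, ‖P z - t a z‖ ≤ C := by
      intro a
      obtain ⟨r₀, hr₀, hiso⟩ := EntireBezout.isolated_zero hg hgz (a : ℂ)
      set R : ℝ := ‖(a : ℂ)‖ + 1 with hRdef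
      have hRpos : 0 < R := by positivity
      set r : ℝ := min (r₀/2) (1/2) with hrdef
      have hrpos : 0 < r := lt_min (by linarith) one_half_pos
      have hsub : closedBall (a : ℂ) r ⊆ ball (a : ℂ) r₀ := by
        apply closedBall_subset_ball
        calc r ≤ r₀/2 := min_le_left _ _
          _ < r₀ := by linarith
      have hball : ball (a : ℂ) r ∩ S ⊆ {(a : ℂ)} := by
        rintro z ⟨hz1, hz2⟩
        by_contra hza
        exact hiso z (hsub (ball_subset_closedBall hz1)) hza hz2
      set Tf := (hTfin (2*R)).toFinset with hTf
      have haT : a ∈ Tf := by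
        simp only [hTf, Set.Finite.mem_toFinset, mem_setOf_eq]
        linarith [norm_nonneg (a : ℂ)]
      have hcont : ContinuousOn (fun z => ∑ b ∈ Tf.erase a, t b z) (closedBall (a : ℂ) r) := by
        apply continuousOn_finset_sum
        intro b hb
        have hba : b ≠ a := Finset.ne_of_mem_erase hb
        apply ((ht1 b).continuousOn).mono
        intro z hz
        simp only [mem_compl_iff, mem_singleton_iff]
        intro hzb
        have hzS : z ∈ S := by rw [hzb]; exact b.2
        have hzr₀ : z ∈ ball (a : ℂ) r₀ := hsub hz
        rcases eq_or_ne z (a : ℂ) with h | h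
        · exact hba (Subtype.ext (hzb.symm.trans h))
        · exact hiso z hzr₀ h hzS
      obtain ⟨C₁, hC₁⟩ := (isCompact_closedBall (a : ℂ) r).exists_bound_of_continuousOn hcont
      set Cε : ℝ := ∑' b : ↑((↑Tf : Set ↥S)ᶜ), ε (b : ↥S) with hCε
      refine ⟨r, hrpos, hball, C₁ + Cε, ?_⟩
      intro z hz
      have hzR : z ∈ ball (0 : ℂ) R := by
        rw [mem_ball, dist_zero_right]
        have h1 : ‖z - (a:ℂ)‖ < r := by rwa [mem_ball, dist_eq_norm] at hz
        calc ‖z‖ = ‖(z - (a:ℂ)) + (a:ℂ)‖ := by ring_nf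
          _ ≤ ‖z - (a:ℂ)‖ + ‖(a:ℂ)‖ := norm_add_le _ _
          _ < r + ‖(a:ℂ)‖ := by linarith
          _ ≤ 1/2 + ‖(a:ℂ)‖ := by have := min_le_right (r₀/2) (1/2); linarith [this]
          _ < R := by rw [hRdef]; linarith
      have hPz : P z - t a z = (∑ b ∈ Tf.erase a, t b z) +
          ∑' b : ↑((↑Tf : Set ↥S)ᶜ), t (b : ↥S) z := by
        have h1 := hdecomp (2*R) z
        rw [← hTf] at h1
        rw [h1]
        have h2 : ∑ b ∈ Tf, t b z = t a z + ∑ b ∈ Tf.erase a, t b z :=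
          (Finset.add_sum_erase Tf (fun b => t b z) haT).symm
        rw [h2]
        ring
      rw [hPz]
      refine le_trans (norm_add_le _ _) (add_le_add ?_ ?_)
      · exact hC₁ z (ball_subset_closedBall hz)
      · exact (htail R hRpos).2 z hzR
    -- the two functions to glue
    set F₁ : ℂ → ℂ := fun z => g z * P z with hF₁
    set F₂ : ℂ → ℂ := fun z => (g z)⁻¹ - f z * P z with hF₂
    have hF₁d : ∀ z ∉ S, DifferentiableAt ℂ F₁ z :=
      fun z hz => (hg.differentiableAt).mul (hPdiff z hz)
    have hF₂d : ∀ z ∉ S, DifferentiableAt ℂ F₂ z := by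
      intro z hz
      have hgz' : g z ≠ 0 := fun h => hz h
      exact (hg.differentiableAt.inv hgz').sub ((hf.differentiableAt).mul (hPdiff z hz))
    -- boundedness of F₁ and F₂ near each a ∈ S
    have hbound : ∀ a ∈ S, ∃ r > 0, (ball a r ∩ S ⊆ {a}) ∧
        (∃ C, ∀ z ∈ ball a r \ {a}, ‖F₁ z‖ ≤ C) ∧
        (∃ C, ∀ z ∈ ball a r \ {a}, ‖F₂ z‖ ≤ C) := by
      intro a ha
      set b : ↥S := ⟨a, ha⟩ with hb
      obtain ⟨r₁, hr₁, hball₁, C₁, hC₁⟩ := hrest b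
      obtain ⟨δ, hδ, C₃, hC₃⟩ := ht3 b
      have hfa : f a ≠ 0 := (hnocommon a).resolve_right (fun h => h ha)
      have hnf : Tendsto (fun z => ‖f z‖) (𝓝 a) (𝓝 ‖f a‖) :=
        (hf.continuous.norm).continuousAt
      have hng : Tendsto (fun z => ‖g z‖) (𝓝 a) (𝓝 ‖g a‖) :=
        (hg.continuous.norm).continuousAt
      have hev : ∀ᶠ z in 𝓝 a, ‖f z‖ ≤ ‖f a‖ + 1 ∧ ‖f a‖/2 ≤ ‖f z‖ ∧ ‖g z‖ ≤ ‖g a‖ + 1 := by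
        have e1 := hnf.eventually (eventually_le_nhds (lt_add_one ‖f a‖))
        have e2 := hnf.eventually (eventually_ge_nhds
          (by have := norm_pos_iff.mpr hfa; linarith : ‖f a‖/2 < ‖f a‖))
        have e3 := hng.eventually (eventually_le_nhds (lt_add_one ‖g a‖))
        filter_upwards [e1, e2, e3] with z h1 h2 h3
        exact ⟨h1, h2, h3⟩
      obtain ⟨r₂, hr₂, hev'⟩ := Metric.eventually_nhds_iff.mp hev
      set r : ℝ := min (min r₁ r₂) δ with hrdef
      have hrpos : 0 < r := lt_min (lt_min hr₁ hr₂) hδ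
      have hballr : ball a r ∩ S ⊆ {a} := by
        rintro z ⟨hz1, hz2⟩
        apply hball₁
        refine ⟨?_, hz2⟩
        exact ball_subset_ball (le_trans (min_le_left _ _) (min_le_left _ _)) hz1
      -- collect the facts for z in the punctured ball
      have hfacts : ∀ z ∈ ball a r \ {a},
          g z ≠ 0 ∧ f z ≠ 0 ∧ ‖f z‖ ≤ ‖f a‖ + 1 ∧ ‖f a‖/2 ≤ ‖f z‖ ∧ ‖g z‖ ≤ ‖g a‖ + 1 ∧
          ‖P z - t b z‖ ≤ C₁ ∧ ‖t b z - (f z * g z)⁻¹‖ ≤ C₃ := by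
        rintro z ⟨hz1, hz2⟩
        simp only [mem_singleton_iff] at hz2
        have hzr₁ : z ∈ ball a r₁ :=
          ball_subset_ball (le_trans (min_le_left _ _) (min_le_left _ _)) hz1
        have hzr₂ : dist z a < r₂ :=
          lt_of_lt_of_le hz1 (le_trans (min_le_left _ _) (min_le_right _ _))
        have hzδ : ‖z - a‖ < δ := by
          rw [← dist_eq_norm]
          exact lt_of_lt_of_le hz1 (min_le_right _ _)
        obtain ⟨e1, e2, e3⟩ := hev' hzr₂
        have hgz' : g z ≠ 0 := by
          intro h
          exact hz2 (hballr ⟨hz1, h⟩)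
        have hfz' : f z ≠ 0 := by
          intro h
          rw [h, norm_zero] at e2
          have := norm_pos_iff.mpr hfa
          linarith
        exact ⟨hgz', hfz', e1, e2, e3, hC₁ z hzr₁, hC₃ z hz2 hzδ⟩
      refine ⟨r, hrpos, hballr, ?_, ?_⟩
      · refine ⟨(‖g a‖ + 1) * C₁ + (‖g a‖ + 1) * C₃ + 2/‖f a‖, ?_⟩
        intro z hz
        obtain ⟨hgz', hfz', e1, e2, e3, k1, k3⟩ := hfacts z hz
        have einv : g z * (f z * g z)⁻¹ = (f z)⁻¹ := by
          rw [mul_inv, mul_comm ((f z)⁻¹) ((g z)⁻¹), ← mul_assoc, mul_inv_cancel₀ hgz', one_mul]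
        have hid : F₁ z = g z * (P z - t b z) + g z * (t b z - (f z * g z)⁻¹) + (f z)⁻¹ := by
          simp only [hF₁]
          rw [← einv]
          ring
        rw [hid]
        have hC₁0 : 0 ≤ C₁ := le_trans (norm_nonneg _) k1
        have hC₃0 : 0 ≤ C₃ := le_trans (norm_nonneg _) k3
        have hga0 : (0:ℝ) ≤ ‖g a‖ + 1 := by positivity
        have hfa0 : (0:ℝ) < ‖f a‖ := norm_pos_iff.mpr hfa
        refine le_trans (norm_add₃_le) (add_le_add (add_le_add ?_ ?_) ?_)
        · rw [norm_mul]
          exact mul_le_mul e3 k1 (norm_nonneg _) hga0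
        · rw [norm_mul]
          exact mul_le_mul e3 k3 (norm_nonneg _) hga0
        · rw [norm_inv]
          rw [div_eq_mul_inv]
          calc ‖f z‖⁻¹ ≤ (‖f a‖/2)⁻¹ := by
                apply inv_anti₀ (by linarith) e2
            _ = 2 * ‖f a‖⁻¹ := by rw [div_eq_mul_inv, mul_inv, inv_inv, mul_comm]
      · refine ⟨(‖f a‖ + 1) * C₃ + (‖f a‖ + 1) * C₁, ?_⟩
        intro z hz
        obtain ⟨hgz', hfz', e1, e2, e3, k1, k3⟩ := hfacts z hz
        have einv : f z * (f z * g z)⁻¹ = (g z)⁻¹ := by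
          rw [mul_inv, ← mul_assoc, mul_inv_cancel₀ hfz', one_mul]
        have hid : F₂ z = f z * ((f z * g z)⁻¹ - t b z) + f z * (t b z - P z) := by
          simp only [hF₂]
          rw [← einv]
          ring
        rw [hid]
        have hC₁0 : 0 ≤ C₁ := le_trans (norm_nonneg _) k1
        have hC₃0 : 0 ≤ C₃ := le_trans (norm_nonneg _) k3
        have hfa0 : (0:ℝ) ≤ ‖f a‖ + 1 := by positivity
        refine le_trans (norm_add_le _ _) (add_le_add ?_ ?_)
        · rw [norm_mul]
          refine mul_le_mul e1 ?_ (norm_nonneg _) hfa0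
          rw [norm_sub_rev]
          exact k3
        · rw [norm_mul]
          refine mul_le_mul e1 ?_ (norm_nonneg _) hfa0
          rw [norm_sub_rev]
          exact k1
    -- glue
    obtain ⟨ft, hftd, hfteq⟩ := EntireBezout.glue hScl F₁ hF₁d
      (fun a ha => by
        obtain ⟨r, hr, hball, ⟨C, hC⟩, _⟩ := hbound a ha
        exact ⟨r, hr, hball, C, hC⟩)
    obtain ⟨gt, hgtd, hgteq⟩ := EntireBezout.glue hScl F₂ hF₂d
      (fun a ha => by
        obtain ⟨r, hr, hball, _, ⟨C, hC⟩⟩ := hbound a ha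
        exact ⟨r, hr, hball, C, hC⟩)
    have eq_off : ∀ z ∉ S, f z * ft z + g z * gt z = 1 := by
      intro z hz
      have hgz' : g z ≠ 0 := fun h => hz h
      rw [hfteq z hz, hgteq z hz, hF₁, hF₂]
      field_simp
      ring
    refine ⟨ft, gt, hftd, hgtd, ?_⟩
    intro z
    by_cases hzS : z ∈ S
    · -- continuity argument
      have hc : ContinuousAt (fun w => f w * ft w + g w * gt w) z := by
        apply ContinuousAt.add
        · exact (hf.continuous.continuousAt).mul (hftd.continuous.continuousAt)
        · exact (hg.continuous.continuousAt).mul (hgtd.continuous.continuousAt)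
      obtain ⟨r, hr, hball, -, -⟩ := hbound z hzS
      have hev : ∀ᶠ w in 𝓝[≠] z, f w * ft w + g w * gt w = 1 := by
        filter_upwards [self_mem_nhdsWithin,
          mem_nhdsWithin_of_mem_nhds (ball_mem_nhds z hr)] with w hw1 hw2
        have hwz : w ≠ z := hw1
        have hwS : w ∉ S := fun hwS => hwz (hball ⟨hw2, hwS⟩)
        exact eq_off w hwS
      have h1 : Tendsto (fun w => f w * ft w + g w * gt w) (𝓝[≠] z)
          (𝓝 (f z * ft z + g z * gt z)) := hc.tendsto.mono_left nhdsWithin_le_nhds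
      have hev2 : (fun w => f w * ft w + g w * gt w) =ᶠ[𝓝[≠] z] (fun _ => (1:ℂ)) := hev
      have h2 : Tendsto (fun w => f w * ft w + g w * gt w) (𝓝[≠] z) (𝓝 1) :=
        Tendsto.congr' hev2.symm tendsto_const_nhds
      exact tendsto_nhds_unique h1 h2
    · exact eq_off z hzS
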